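/- With notation as in the eigenfunction construction for V_{a,N} (D = gcd(a,N), M = N/D), the N functions \psi_{\eta,l} for \eta \in {1,...,D}, l \in {0,...,M-1} form an orthonormal basis of L^2(Z_N): \langle \psi_{\eta,l}, \psi_{\eta',l'} \rangle = 1 if (\eta,l)=(\eta',l') and 0 otherwise. -/

import Mathlib

open Finset

/-- The eigenfunction `ψ_{η,l}` of `V_{a,N}` (see the paper): supported on residues
`P ≡ η + ν a (mod N)`, `ν ∈ {0,…,M-1}`, vanishing for `P ≢ η mod D`. -/
noncomputable def eigfun (N : ℕ) (a : ℤ) (D M η l : ℕ) : ZMod N → ℂ :=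
  fun P => (Real.sqrt D : ℂ) * ∑ ν ∈ Finset.range M,
    if P = (η : ZMod N) + (ν : ZMod N) * (a : ZMod N) then
      Complex.exp (2 * Real.pi * Complex.I *
        (-((η : ℂ) * (a : ℂ) * (ν : ℂ) ^ 2) - (ν : ℂ) * (l : ℂ) * (D : ℂ) +
          (a : ℂ) ^ 2 * (ν : ℂ) *
            (((M : ℂ) - 1) * (2 * (M : ℂ) - 1) - ((ν : ℂ) - 1) * (2 * (ν : ℂ) - 1)) / 6)
        / (N : ℂ))
    else 0

/-- The support point `η + ν a` in `ZMod N`. -/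
def eigA (N : ℕ) (a : ℤ) (e ν : ℕ) : ZMod N := (e : ZMod N) + (ν : ZMod N) * (a : ZMod N)

/-- The phase factor of the eigenfunction. -/
noncomputable def eigc (N : ℕ) (a : ℤ) (D M e ll ν : ℕ) : ℂ :=
  Complex.exp (2 * Real.pi * Complex.I *
    (-((e : ℂ) * (a : ℂ) * (ν : ℂ) ^ 2) - (ν : ℂ) * (ll : ℂ) * (D : ℂ) +
      (a : ℂ) ^ 2 * (ν : ℂ) *
        (((M : ℂ) - 1) * (2 * (M : ℂ) - 1) - ((ν : ℂ) - 1) * (2 * (ν : ℂ) - 1)) / 6)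
    / (N : ℂ))

lemma eigfun_eq (N : ℕ) (a : ℤ) (D M η l : ℕ) (P : ZMod N) :
    eigfun N a D M η l P = (Real.sqrt D : ℂ) * ∑ ν ∈ Finset.range M,
      if P = eigA N a η ν then eigc N a D M η l ν else 0 := rfl

lemma eig_key (N : ℕ) [NeZero N] (a : ℤ) (D M : ℕ) (hD : D = Int.gcd a (N : ℤ)) (hM : M = N / D)
    (η η' ν ν' : ℕ) (hη : η ∈ Finset.Icc 1 D) (hη' : η' ∈ Finset.Icc 1 D)
    (hν : ν < M) (hν' : ν' < M)
    (h : eigA N a η ν = eigA N a η' ν') :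
    η = η' ∧ ν = ν' := by
  simp only [eigA] at h
  simp only [Finset.mem_Icc] at hη hη'
  have hN0 : (N : ℤ) ≠ 0 := by exact_mod_cast (NeZero.ne N)
  have hD0 : 0 < D := by
    rw [hD]
    exact Int.gcd_pos_of_ne_zero_right a hN0
  have hDa : (D : ℤ) ∣ a := hD ▸ Int.gcd_dvd_left a (N : ℤ)
  have hDN : (D : ℤ) ∣ (N : ℤ) := hD ▸ Int.gcd_dvd_right a (N : ℤ)
  have hDNnat : D ∣ N := by exact_mod_cast hDN
  have hN : N = D * M := by rw [hM, Nat.mul_div_cancel' hDNnat]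
  have h2 : ((η : ℤ) + ν * a : ℤ) ≡ ((η' : ℤ) + ν' * a : ℤ) [ZMOD (N : ℤ)] := by
    rw [← ZMod.intCast_eq_intCast_iff]
    push_cast
    exact_mod_cast h
  have h3 : (N : ℤ) ∣ ((η' : ℤ) + ν' * a) - ((η : ℤ) + ν * a) := Int.ModEq.dvd h2
  have hDη : (D : ℤ) ∣ (η' : ℤ) - η := by
    have : (D : ℤ) ∣ ((η' : ℤ) + ν' * a) - ((η : ℤ) + ν * a) := dvd_trans hDN h3
    have h4 : (η' : ℤ) - η = (((η' : ℤ) + ν' * a) - ((η : ℤ) + ν * a)) - (ν' * a - ν * a) := by ring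
    rw [h4]
    exact dvd_sub this (dvd_sub (Dvd.dvd.mul_left hDa _) (Dvd.dvd.mul_left hDa _))
  have hηη : η = η' := by
    have : (η' : ℤ) - η = 0 := by
      refine Int.eq_zero_of_abs_lt_dvd hDη ?_
      rw [abs_lt]
      omega
    omega
  refine ⟨hηη, ?_⟩
  subst hηη
  have h5 : (N : ℤ) ∣ ((ν' : ℤ) - ν) * a := by
    have : ((ν' : ℤ) - ν) * a = ((η : ℤ) + ν' * a) - ((η : ℤ) + ν * a) := by ring
    rw [this]; exact h3
  obtain ⟨a₁, ha₁⟩ := hDa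
  have hMdvd : (M : ℤ) ∣ ((ν' : ℤ) - ν) := by
    have hMN : ((D : ℤ)) * M ∣ ((ν' : ℤ) - ν) * (D * a₁) := by
      rw [← ha₁, ← Nat.cast_mul, ← hN]; exact h5
    have hM1 : (M : ℤ) ∣ ((ν' : ℤ) - ν) * a₁ := by
      rcases hMN with ⟨k, hk⟩
      refine ⟨k, ?_⟩
      have hD0' : (D : ℤ) ≠ 0 := by exact_mod_cast hD0.ne'
      apply mul_left_cancel₀ hD0'
      linarith [hk]
    have hcop : Int.gcd a₁ M = 1 := by
      have := Int.gcd_div_gcd_div_gcd (i := a) (j := (N : ℤ)) (by rw [← hD]; exact_mod_cast hD0)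
      have e1 : a / Int.gcd a N = a₁ := by
        rw [← hD, ha₁]; exact Int.mul_ediv_cancel_left _ (by exact_mod_cast hD0.ne')
      have e2 : (N : ℤ) / Int.gcd a N = M := by
        rw [← hD, hN]; push_cast; exact Int.mul_ediv_cancel_left _ (by exact_mod_cast hD0.ne')
      rwa [e1, e2] at this
    exact Int.dvd_of_dvd_mul_left_of_gcd_one hM1 (by rw [Int.gcd_comm]; exact hcop)
  have : (ν' : ℤ) - ν = 0 := by
    refine Int.eq_zero_of_abs_lt_dvd hMdvd ?_
    rw [abs_lt]
    omega
  omega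

lemma sum_ite_pair {α : Type*} [Fintype α] [DecidableEq α] (A B : α) (v : ℂ) :
    ∑ P : α, (if P = A ∧ P = B then v else 0) = if A = B then v else 0 := by
  by_cases h : A = B
  · subst h
    simp
  · rw [if_neg h, Finset.sum_eq_zero]
    intro P _
    rw [if_neg]
    rintro ⟨rfl, rfl⟩
    exact h rfl

/-- The `N` functions `ψ_{η,l}`, `η ∈ {1,…,D}`, `l ∈ {0,…,M-1}`,
form an orthonormal system (hence a basis, there being `N = DM` of them) in
`L²(ℤ_N)` with inner product `⟨φ,ψ⟩ = (1/N)∑_Q φ(Q) conj(ψ(Q))`. -/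
theorem eigfun_orthonormal (N : ℕ) [NeZero N] (a : ℤ)
    (D M : ℕ) (hD : D = Int.gcd a (N : ℤ)) (hM : M = N / D)
    (η η' : ℕ) (hη : η ∈ Finset.Icc 1 D) (hη' : η' ∈ Finset.Icc 1 D)
    (l l' : ℕ) (hl : l < M) (hl' : l' < M) :
    (1 / (N : ℂ)) * ∑ P : ZMod N,
        eigfun N a D M η l P * (starRingEnd ℂ) (eigfun N a D M η' l' P) =
    if (η, l) = (η', l') then 1 else 0 := by
  classical
  have hN0 : N ≠ 0 := NeZero.ne N
  have hD0 : 0 < D := by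
    rw [hD]; exact Int.gcd_pos_of_ne_zero_right a (by exact_mod_cast hN0)
  have hDNnat : D ∣ N := by
    have : (D : ℤ) ∣ (N : ℤ) := hD ▸ Int.gcd_dvd_right a (N : ℤ)
    exact_mod_cast this
  have hNDM : N = D * M := by rw [hM, Nat.mul_div_cancel' hDNnat]
  have hM0 : 0 < M := by
    rcases Nat.eq_zero_or_pos M with h | h
    · exfalso; rw [h, Nat.mul_zero] at hNDM; exact hN0 hNDM
    · exact h
  have hNc : (N : ℂ) = (D : ℂ) * (M : ℂ) := by rw [hNDM]; push_cast; ring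
  have hDc0 : (D : ℂ) ≠ 0 := Nat.cast_ne_zero.mpr hD0.ne'
  have hMc0 : (M : ℂ) ≠ 0 := Nat.cast_ne_zero.mpr hM0.ne'
  have hNc0 : (N : ℂ) ≠ 0 := Nat.cast_ne_zero.mpr hN0
  -- Step 1: expand the summand
  have step1 : ∀ P : ZMod N,
      eigfun N a D M η l P * (starRingEnd ℂ) (eigfun N a D M η' l' P)
        = (D : ℂ) * ∑ ν ∈ Finset.range M, ∑ ν' ∈ Finset.range M,
            if P = eigA N a η ν ∧ P = eigA N a η' ν' then
              eigc N a D M η l ν * (starRingEnd ℂ) (eigc N a D M η' l' ν') else 0 := by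
    intro P
    rw [eigfun_eq, eigfun_eq, map_mul, mul_mul_mul_comm]
    congr 1
    · rw [Complex.conj_ofReal, ← Complex.ofReal_mul,
        Real.mul_self_sqrt (Nat.cast_nonneg D), Complex.ofReal_natCast]
    · rw [map_sum, Finset.sum_mul_sum]
      refine Finset.sum_congr rfl fun ν _ => Finset.sum_congr rfl fun ν' _ => ?_
      rw [apply_ite (starRingEnd ℂ), map_zero, ite_zero_mul_ite_zero]
  -- Step 2: swap the sums and collapse the sum over P
  have step2 : (∑ P : ZMod N,
      eigfun N a D M η l P * (starRingEnd ℂ) (eigfun N a D M η' l' P))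
        = (D : ℂ) * ∑ ν ∈ Finset.range M, ∑ ν' ∈ Finset.range M,
            if eigA N a η ν = eigA N a η' ν' then
              eigc N a D M η l ν * (starRingEnd ℂ) (eigc N a D M η' l' ν') else 0 := by
    rw [Finset.sum_congr rfl fun P _ => step1 P, ← Finset.mul_sum]
    congr 1
    rw [Finset.sum_comm]
    refine Finset.sum_congr rfl fun ν _ => ?_
    rw [Finset.sum_comm]
    exact Finset.sum_congr rfl fun ν' _ => sum_ite_pair _ _ _
  rw [step2]
  by_cases hηη : η = η'
  · subst hηη
    -- collapse the double sum using injectivity in ν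
    have step3 : ∀ ν ∈ Finset.range M,
        (∑ ν' ∈ Finset.range M,
          if eigA N a η ν = eigA N a η ν' then
            eigc N a D M η l ν * (starRingEnd ℂ) (eigc N a D M η l' ν') else 0)
        = eigc N a D M η l ν * (starRingEnd ℂ) (eigc N a D M η l' ν) := by
      intro ν hν
      rw [Finset.mem_range] at hν
      have : ∀ ν' ∈ Finset.range M,
          (if eigA N a η ν = eigA N a η ν' then
            eigc N a D M η l ν * (starRingEnd ℂ) (eigc N a D M η l' ν') else 0)
          = (if ν' = ν then eigc N a D M η l ν * (starRingEnd ℂ) (eigc N a D M η l' ν') else 0) := by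
        intro ν' hν'
        rw [Finset.mem_range] at hν'
        by_cases hc : ν' = ν
        · subst hc; simp
        · rw [if_neg hc, if_neg]
          intro h
          exact hc ((eig_key N a D M hD hM η η ν ν' hη hη hν hν' h).2.symm)
      rw [Finset.sum_congr rfl this, Finset.sum_ite_eq' (Finset.range M) ν,
        if_pos (Finset.mem_range.mpr hν)]
    rw [Finset.sum_congr rfl step3]
    -- compute each term as a power
    have hterm : ∀ ν : ℕ,
        eigc N a D M η l ν * (starRingEnd ℂ) (eigc N a D M η l' ν)
          = Complex.exp (2 * Real.pi * Complex.I * (((l' : ℂ) - l) / M)) ^ ν := by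
      intro ν
      rw [eigc, eigc, ← Complex.exp_conj, ← Complex.exp_add, ← Complex.exp_nat_mul]
      congr 1
      rw [map_div₀]
      simp only [map_mul, map_add, map_sub, map_neg, map_pow, Complex.conj_I, map_ofNat,
        Complex.conj_ofReal, map_natCast, map_intCast, map_div₀, map_one]
      rw [hNc]
      field_simp
      ring
    rw [Finset.sum_congr rfl fun ν _ => hterm ν]
    by_cases hll : l = l'
    · subst hll
      simp only [sub_self, zero_div, mul_zero, Complex.exp_zero, one_pow,
        Finset.sum_const, Finset.card_range, nsmul_eq_mul, mul_one]
      rw [if_pos trivial, hNc]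
      field_simp
    · rw [if_neg (by simp [Prod.ext_iff]; tauto)]
      set z : ℂ := Complex.exp (2 * Real.pi * Complex.I * (((l' : ℂ) - l) / M)) with hz
      have hpi : (2 * (Real.pi : ℂ) * Complex.I) ≠ 0 := by
        refine mul_ne_zero (mul_ne_zero two_ne_zero ?_) Complex.I_ne_zero
        exact Complex.ofReal_ne_zero.mpr Real.pi_ne_zero
      have hz1 : z ≠ 1 := by
        intro h1
        rw [hz, Complex.exp_eq_one_iff] at h1
        obtain ⟨n, hn⟩ := h1
        have h3 : ((l' : ℂ) - l) = (n : ℂ) * M := by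
          field_simp at hn
          apply mul_left_cancel₀ hpi
          linear_combination (2 * (Real.pi : ℂ) * Complex.I) * hn
        have h4 : ((l' : ℤ) - l) = n * M := by exact_mod_cast h3
        have hdvd : (M : ℤ) ∣ (l' : ℤ) - l := ⟨n, by rw [h4]; ring⟩
        have h5 : (l' : ℤ) - l = 0 :=
          Int.eq_zero_of_abs_lt_dvd hdvd (by rw [abs_lt]; constructor <;> omega)
        omega
      have hzM : z ^ M = 1 := by
        rw [hz, ← Complex.exp_nat_mul]
        have : (M : ℂ) * (2 * Real.pi * Complex.I * (((l' : ℂ) - l) / M))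
            = ((l' : ℤ) - l : ℤ) * (2 * Real.pi * Complex.I) := by
          push_cast
          field_simp
        rw [this, Complex.exp_int_mul_two_pi_mul_I]
      rw [geom_sum_eq hz1 M, hzM, sub_self, zero_div, mul_zero, mul_zero]
  · rw [if_neg (by simp [Prod.ext_iff]; tauto)]
    rw [Finset.sum_eq_zero, mul_zero, mul_zero]
    intro ν hν
    rw [Finset.sum_eq_zero]
    intro ν' hν'
    rw [if_neg]
    intro h
    exact hηη (eig_key N a D M hD hM η η' ν ν' hη hη' (Finset.mem_range.mp hν)
      (Finset.mem_range.mp hν') h).1
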